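/- For every finite connected undirected simple graph G = (V, E) with |V| ≥ 2, there exists a partition of V into sets each of cardinality 2 or 3 and of diameter at most 2 for the graph distance on G (i.e., any two vertices in the same part are at graph distance at most 2 in G). -/

import Mathlib

open SimpleGraph Finset

def inclHom {V : Type*} (G : SimpleGraph V) (s : Set V) : G.induce s →g G :=
  ⟨Subtype.val, fun h => h⟩

lemma edist_le_of_induce_walk {V : Type*} {G : SimpleGraph V} {s : Set V}
    {x y : ↥s} (w : (G.induce s).Walk x y) : G.edist ↑x ↑y ≤ w.length := by
  have := SimpleGraph.edist_le (w.map (inclHom G s))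
  exact (by simpa using this : G.edist ((inclHom G s) x) ((inclHom G s) y) ≤ w.length)

lemma dist_add_takeUntil_le {W : Type*} [DecidableEq W] {H : SimpleGraph W} {x r z : W}
    (w : H.Walk x r) (hz : z ∈ w.support) :
    H.dist z r + (w.takeUntil z hz).length ≤ w.length := by
  have hspec := w.take_spec hz
  have hlen : (w.takeUntil z hz).length + (w.dropUntil z hz).length = w.length := by
    rw [← SimpleGraph.Walk.length_append, hspec]
  have := SimpleGraph.dist_le (w.dropUntil z hz)
  omega

/-- Core extraction: in a finite connected graph, either the whole graph has diameter ≤ 2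
from some root, or we can find two distinct vertices at distance ≤ 2 whose removal keeps
everything else connected to a root `r` via avoiding walks. -/
lemma core_lemma {W : Type*} [Fintype W] [DecidableEq W] {H : SimpleGraph W}
    (hconn : H.Connected) :
    (∀ x y : W, H.dist x y ≤ 2) ∨
    ∃ a b : W, a ≠ b ∧ H.dist a b ≤ 2 ∧
      ∀ x : W, x ≠ a → x ≠ b →
        ∀ y : W, y ≠ a → y ≠ b →
          ∃ wxy : H.Walk x y, a ∉ wxy.support ∧ b ∉ wxy.support := by
  haveI : Nonempty W := hconn.nonempty
  obtain ⟨r⟩ : Nonempty W := inferInstance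
  obtain ⟨v, -, hmax⟩ := Finset.exists_max_image Finset.univ (fun x => H.dist r x)
    Finset.univ_nonempty
  set D := H.dist r v with hD
  by_cases hD1 : D ≤ 1
  · left
    intro x y
    have h1 : H.dist x r ≤ 1 := by
      rw [SimpleGraph.dist_comm]
      exact le_trans (hmax x (Finset.mem_univ x)) hD1
    have h2 : H.dist r y ≤ 1 := le_trans (hmax y (Finset.mem_univ y)) hD1
    calc H.dist x y ≤ H.dist x r + H.dist r y := hconn.dist_triangle
    _ ≤ 2 := by omega
  · right
    have hD2 : 2 ≤ D := by omega
    have hvr : v ≠ r := by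
      intro h; rw [h] at hD; simp [SimpleGraph.dist_self] at hD; omega
    obtain ⟨w, hw⟩ := hconn.exists_walk_length_eq_dist v r
    obtain ⟨u, hadj, p, rfl⟩ := w.exists_eq_cons_of_ne hvr
    have hplen : p.length + 1 = D := by
      have : (SimpleGraph.Walk.cons hadj p).length = p.length + 1 := by
        simp [SimpleGraph.Walk.length_cons]
      rw [this] at hw
      rw [hw, SimpleGraph.dist_comm]
    have hdur : H.dist u r ≤ D - 1 := by
      have := SimpleGraph.dist_le p; omega
    have hduv : H.dist u v ≤ 1 := by
      have := SimpleGraph.dist_le (SimpleGraph.Walk.cons hadj.symm (SimpleGraph.Walk.nil))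
      simpa using this
    have hdru : H.dist r u = D - 1 := by
      have h1 : D ≤ H.dist r u + H.dist u v := by
        rw [hD]; exact hconn.dist_triangle
      have h2 : H.dist r u = H.dist u r := SimpleGraph.dist_comm ..
      omega
    -- avoidance, towards the root
    suffices hsuff : ∃ a b : W, a ≠ b ∧ H.dist a b ≤ 2 ∧
        ∀ x : W, x ≠ a → x ≠ b →
          ∃ wx : H.Walk x r, a ∉ wx.support ∧ b ∉ wx.support by
      obtain ⟨a, b, hab, hd, hav⟩ := hsuff
      refine ⟨a, b, hab, hd, ?_⟩
      intro x hxa hxb y hya hyb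
      obtain ⟨wx, hwxa, hwxb⟩ := hav x hxa hxb
      obtain ⟨wy, hwya, hwyb⟩ := hav y hya hyb
      refine ⟨wx.append wy.reverse, ?_, ?_⟩ <;>
      · rw [SimpleGraph.Walk.mem_support_append_iff]
        push_neg
        constructor
        · assumption
        · rw [SimpleGraph.Walk.support_reverse, List.mem_reverse]; assumption
    -- a helper: any shortest walk from x to r avoids the far layer (except at x)
    have key : ∀ (x z : W) (wx : H.Walk x r), wx.length = H.dist x r → z ≠ x →
        ∀ hz : z ∈ wx.support, H.dist z r + 1 ≤ H.dist x r ∧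
          ((wx.takeUntil z hz).length = 1 → H.Adj x z) := by
      intro x z wx hwx hzx hz
      have hsplit := dist_add_takeUntil_le wx hz
      have htpos : 1 ≤ (wx.takeUntil z hz).length := by
        by_contra h
        push_neg at h
        interval_cases h' : (wx.takeUntil z hz).length
        · exact hzx (SimpleGraph.Walk.eq_of_length_eq_zero h').symm
      constructor
      · omega
      · intro h1
        exact SimpleGraph.Walk.adj_of_length_eq_one h1
    by_cases hc : ∃ c : W, c ≠ v ∧ H.dist r c = D ∧ H.Adj u c
    · obtain ⟨c, hcv, hdrc, huc⟩ := hc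
      refine ⟨v, c, Ne.symm hcv, ?_, ?_⟩
      · calc H.dist v c ≤ H.dist v u + H.dist u c := hconn.dist_triangle
        _ ≤ 2 := by
          have h1 : H.dist v u ≤ 1 := by rw [SimpleGraph.dist_comm]; exact hduv
          have h2 : H.dist u c ≤ 1 := by
            have := SimpleGraph.dist_le (SimpleGraph.Walk.cons huc (SimpleGraph.Walk.nil))
            simpa using this
          omega
      · intro x hxv hxc
        obtain ⟨wx, hwx⟩ := hconn.exists_walk_length_eq_dist x r
        have hxr : H.dist x r ≤ D := by
          rw [SimpleGraph.dist_comm]; exact hmax x (Finset.mem_univ x)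
        refine ⟨wx, ?_, ?_⟩
        · intro hmem
          have := (key x v wx hwx (Ne.symm hxv) hmem).1
          have hvrD : H.dist v r = D := by rw [SimpleGraph.dist_comm, ← hD]
          omega
        · intro hmem
          have := (key x c wx hwx (Ne.symm hxc) hmem).1
          have hcrD : H.dist c r = D := by rw [SimpleGraph.dist_comm, hdrc]
          omega
    · refine ⟨v, u, ?_, ?_, ?_⟩
      · intro h
        rw [h] at hD
        omega
      · rw [SimpleGraph.dist_comm]; omega
      · intro x hxv hxu
        obtain ⟨wx, hwx⟩ := hconn.exists_walk_length_eq_dist x r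
        have hxr : H.dist x r ≤ D := by
          rw [SimpleGraph.dist_comm]; exact hmax x (Finset.mem_univ x)
        refine ⟨wx, ?_, ?_⟩
        · intro hmem
          have := (key x v wx hwx (Ne.symm hxv) hmem).1
          have hvrD : H.dist v r = D := by rw [SimpleGraph.dist_comm, ← hD]
          omega
        · intro hmem
          obtain ⟨h1, h2⟩ := key x u wx hwx (Ne.symm hxu) hmem
          have hurD : H.dist u r = D - 1 := by rw [SimpleGraph.dist_comm, hdru]
          -- from the split inequality, takeUntil has length exactly 1 and dist x r = D
          have hsplit := dist_add_takeUntil_le wx (by exact hmem)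
          rw [hwx] at hsplit
          have htpos : 1 ≤ (wx.takeUntil u hmem).length := by
            by_contra h
            push_neg at h
            interval_cases h' : (wx.takeUntil u hmem).length
            · exact (Ne.symm hxu) (SimpleGraph.Walk.eq_of_length_eq_zero h').symm
          have ht1 : (wx.takeUntil u hmem).length = 1 := by omega
          have hadjxu : H.Adj x u := h2 ht1
          have hdx : H.dist x r = D := by omega
          exact hc ⟨x, hxv, by rw [SimpleGraph.dist_comm]; exact hdx, hadjxu.symm⟩

lemma parts23 {V : Type*} [DecidableEq V] :
    ∀ (n : ℕ) (s : Finset V), s.card = n → 2 ≤ n →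
    ∃ P : Finpartition s, ∀ t ∈ P.parts, t.card = 2 ∨ t.card = 3 := by
  intro n
  induction n using Nat.strong_induction_on with
  | _ n ih =>
    intro s hcard h2
    by_cases h3 : n ≤ 3
    · refine ⟨Finpartition.indiscrete ?_, ?_⟩
      · intro h; rw [h] at hcard; simp at hcard; omega
      · intro t ht
        simp [Finpartition.indiscrete_parts] at ht
        subst ht; omega
    · have h4 : 4 ≤ n := by omega
      obtain ⟨a, ha⟩ : s.Nonempty := Finset.card_pos.mp (by omega)
      obtain ⟨b, hb⟩ : (s.erase a).Nonempty := Finset.card_pos.mp (by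
        rw [Finset.card_erase_of_mem ha]; omega)
      have hba : b ≠ a := Finset.ne_of_mem_erase hb
      have hbs : b ∈ s := Finset.mem_of_mem_erase hb
      have hpair : ({a, b} : Finset V) ⊆ s := by
        intro z hz; simp at hz; rcases hz with h | h <;> simp [h, ha, hbs]
      have hpc : ({a, b} : Finset V).card = 2 := Finset.card_pair hba.symm
      have hcard' : (s \ {a, b}).card = n - 2 := by
        rw [Finset.card_sdiff_of_subset hpair, hpc, hcard]
      obtain ⟨P, hP⟩ := ih (n - 2) (by omega) (s \ {a, b}) hcard' (by omega)
      refine ⟨P.extend (b := ({a,b} : Finset V)) ?_ ?_ ?_, ?_⟩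
      · simp
      · exact Finset.sdiff_disjoint
      · exact Finset.sdiff_union_of_subset hpair
      · intro t ht
        rw [Finpartition.extend_parts, Finset.mem_insert] at ht
        rcases ht with rfl | ht
        · left; exact hpc
        · exact hP t ht

lemma reachable_of_walk_avoid {V : Type*} {G : SimpleGraph V} {s s' : Finset V} :
    ∀ {x' y' : ↥(↑s : Set V)} (w : (G.induce (↑s : Set V)).Walk x' y')
      (_ : ∀ z ∈ w.support, (z : V) ∈ s')
      {x y : V} (hx : x ∈ s') (hy : y ∈ s') (_ : (x' : V) = x) (_ : (y' : V) = y),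
      (G.induce (↑s' : Set V)).Reachable ⟨x, hx⟩ ⟨y, hy⟩ := by
  intro x' y' w
  induction w with
  | nil =>
    intro hsup x y hx hy hx' hy'
    have : x = y := by rw [← hx', ← hy']
    subst this
    rfl
  | @cons a m c h p ih =>
    intro hsup x y hx hy hx' hy'
    have hm : (m : V) ∈ s' := hsup m (by simp [SimpleGraph.Walk.support_cons])
    have hadj : (G.induce (↑s' : Set V)).Adj ⟨x, hx⟩ ⟨(m : V), hm⟩ := by
      show G.Adj x (m : V)
      rw [← hx']; exact h
    exact hadj.reachable.trans
      (ih (fun z hz => hsup z (by simp [SimpleGraph.Walk.support_cons, hz])) hm hy rfl hy')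

lemma main_aux {V : Type*} [Fintype V] [DecidableEq V] (G : SimpleGraph V) :
    ∀ (n : ℕ) (s : Finset V), s.card = n → 2 ≤ n → (G.induce (↑s : Set V)).Connected →
    ∃ P : Finpartition s, ∀ t ∈ P.parts, (t.card = 2 ∨ t.card = 3) ∧
      ∀ x ∈ t, ∀ y ∈ t, G.edist x y ≤ 2 := by
  intro n
  induction n using Nat.strong_induction_on with
  | _ n ih =>
  intro s hcard h2 hconn
  by_cases h3 : n ≤ 3
  · refine ⟨Finpartition.indiscrete ?_, ?_⟩
    · intro h; rw [h] at hcard; simp at hcard; omega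
    · intro t ht
      rw [Finpartition.indiscrete_parts, Finset.mem_singleton] at ht
      refine ⟨by rw [ht]; omega, ?_⟩
      intro x hx y hy
      rw [ht] at hx hy
      have hx' : x ∈ (↑s : Set V) := hx
      have hy' : y ∈ (↑s : Set V) := hy
      obtain ⟨w⟩ := hconn ⟨x, hx'⟩ ⟨y, hy'⟩
      have hp := w.bypass_isPath
      have hlen : w.bypass.length < Fintype.card ↥(↑s : Set V) := hp.length_lt
      have hcardW : Fintype.card ↥(↑s : Set V) = s.card := Fintype.card_coe s
      have hle : w.bypass.length ≤ 2 := by omega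
      calc G.edist x y ≤ (w.bypass.length : ℕ∞) := edist_le_of_induce_walk w.bypass
      _ ≤ 2 := by exact_mod_cast hle
  · have h4 : 4 ≤ n := by omega
    rcases core_lemma hconn with hall | ⟨a, b, hab, hdab, havoid⟩
    · obtain ⟨P, hP⟩ := parts23 n s hcard h2
      refine ⟨P, ?_⟩
      intro t ht
      refine ⟨hP t ht, ?_⟩
      intro x hx y hy
      have hxs : x ∈ s := P.le ht hx
      have hys : y ∈ s := P.le ht hy
      have hx' : x ∈ (↑s : Set V) := hxs
      have hy' : y ∈ (↑s : Set V) := hys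
      obtain ⟨w, hw⟩ := hconn.exists_walk_length_eq_dist ⟨x, hx'⟩ ⟨y, hy'⟩
      have h2' : w.length ≤ 2 := by rw [hw]; exact hall _ _
      calc G.edist x y ≤ (w.length : ℕ∞) := edist_le_of_induce_walk w
      _ ≤ 2 := by exact_mod_cast h2'
    · have has : (↑a : V) ∈ s := a.2
      have hbs : (↑b : V) ∈ s := b.2
      have hab' : (↑a : V) ≠ ↑b := fun h => hab (Subtype.ext h)
      set s' := s \ {↑a, ↑b} with hs'
      have hsub : ({(↑a : V), ↑b} : Finset V) ⊆ s := by
        intro z hz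
        rw [Finset.mem_insert, Finset.mem_singleton] at hz
        rcases hz with rfl | rfl
        exacts [has, hbs]
      have hpc : ({(↑a : V), ↑b} : Finset V).card = 2 := Finset.card_pair hab'
      have hcard' : s'.card = n - 2 := by
        rw [hs', Finset.card_sdiff_of_subset hsub, hpc, hcard]
      have hmem' : ∀ z : V, z ∈ s' ↔ z ∈ s ∧ z ≠ ↑a ∧ z ≠ ↑b := by
        intro z; rw [hs']; simp [Finset.mem_sdiff, not_or, and_assoc]
      have hGab : G.edist ↑a ↑b ≤ 2 := by
        obtain ⟨w, hw⟩ := hconn.exists_walk_length_eq_dist a b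
        have h2' : w.length ≤ 2 := by rw [hw]; exact hdab
        calc G.edist ↑a ↑b ≤ (w.length : ℕ∞) := edist_le_of_induce_walk w
        _ ≤ 2 := by exact_mod_cast h2'
      have hconn' : (G.induce (↑s' : Set V)).Connected := by
        rw [SimpleGraph.connected_iff]
        constructor
        · rintro ⟨x, hx⟩ ⟨y, hy⟩
          have hx1 := (hmem' x).mp (Finset.mem_coe.mp hx)
          have hy1 := (hmem' y).mp (Finset.mem_coe.mp hy)
          have hxW : x ∈ (↑s : Set V) := hx1.1
          have hyW : y ∈ (↑s : Set V) := hy1.1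
          have hxa : (⟨x, hxW⟩ : ↥(↑s : Set V)) ≠ a := fun h => hx1.2.1 (congrArg Subtype.val h)
          have hxb : (⟨x, hxW⟩ : ↥(↑s : Set V)) ≠ b := fun h => hx1.2.2 (congrArg Subtype.val h)
          have hya : (⟨y, hyW⟩ : ↥(↑s : Set V)) ≠ a := fun h => hy1.2.1 (congrArg Subtype.val h)
          have hyb : (⟨y, hyW⟩ : ↥(↑s : Set V)) ≠ b := fun h => hy1.2.2 (congrArg Subtype.val h)
          obtain ⟨wxy, hwa, hwb⟩ := havoid _ hxa hxb _ hya hyb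
          have hsup : ∀ z ∈ wxy.support, (z : V) ∈ s' := by
            intro z hz
            rw [hmem' (z : V)]
            refine ⟨z.2, ?_, ?_⟩
            · intro h; exact hwa (by rwa [Subtype.ext h] at hz)
            · intro h; exact hwb (by rwa [Subtype.ext h] at hz)
          exact reachable_of_walk_avoid wxy hsup (Finset.mem_coe.mp hx)
            (Finset.mem_coe.mp hy) rfl rfl
        · obtain ⟨z, hz⟩ : s'.Nonempty := Finset.card_pos.mp (by omega)
          exact ⟨⟨z, hz⟩⟩
      obtain ⟨P', hP'⟩ := ih (n - 2) (by omega) s' hcard' (by omega) hconn'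
      refine ⟨P'.extend (b := ({(↑a : V), ↑b} : Finset V)) (by simp) Finset.sdiff_disjoint
        (Finset.sdiff_union_of_subset hsub), ?_⟩
      intro t ht
      rw [Finpartition.extend_parts, Finset.mem_insert] at ht
      rcases ht with rfl | ht
      · refine ⟨Or.inl hpc, ?_⟩
        intro x hx y hy
        simp only [Finset.mem_insert, Finset.mem_singleton] at hx hy
        rcases hx with rfl | rfl <;> rcases hy with rfl | rfl
        · simp [SimpleGraph.edist_self]
        · exact hGab
        · rw [SimpleGraph.edist_comm]; exact hGab
        · simp [SimpleGraph.edist_self]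
      · exact hP' t ht

/-- **Pairing vertices in a connected graph.**
For every finite connected undirected simple graph `G` with at least two vertices, there
exists a partition of the vertex set into parts of cardinality 2 or 3, each of diameter
at most 2 for the graph distance (any two vertices of a part are at graph distance at
most 2). -/
theorem partition_pairs_triples_of_connected
    {V : Type*} [Fintype V] [DecidableEq V] (G : SimpleGraph V)
    (hG : G.Connected) (hV : 2 ≤ Fintype.card V) :
    ∃ P : Finpartition (Finset.univ : Finset V),
      ∀ s ∈ P.parts, (s.card = 2 ∨ s.card = 3) ∧
        ∀ x ∈ s, ∀ y ∈ s, G.edist x y ≤ 2 := by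
  have hconn : (G.induce (↑(Finset.univ : Finset V) : Set V)).Connected := by
    rw [Finset.coe_univ]
    exact (SimpleGraph.induceUnivIso G).connected_iff.mpr hG
  obtain ⟨P, hP⟩ := main_aux G (Fintype.card V) Finset.univ Finset.card_univ hV hconn
  exact ⟨P, hP⟩
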